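/- For a vector d = (d_1,…,d_n) ∈ ℤ^n, there exists a bidirected graph B on vertex set [n] with net-degree sequence ds(B) = d if and only if d_1 + ⋯ + d_n is even and −(n−1) ≤ d_i ≤ n−1 for all i = 1,…,n. -/

import Mathlib

/-- A bidirected graph (bigraph) on vertex set `Fin n`, encoded by its bidirection
function: `bd u v` is the local orientation `τ(u, uv) ∈ {−1,+1}` of the edge `uv` at its
endpoint `u` if `uv` is an edge, and `0` if `u` and `v` are not joined by an edge. -/
structure Bigraph (n : ℕ) where
  bd : Fin n → Fin n → ℤ
  bd_mem : ∀ u v, bd u v = -1 ∨ bd u v = 0 ∨ bd u v = 1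
  loopless : ∀ v, bd v v = 0
  adj_symm : ∀ u v, bd u v = 0 ↔ bd v u = 0

/-- The net-degree of a node `v`: the sum of the local orientations at `v` of all edges
incident to `v`. -/
def Bigraph.netDeg {n : ℕ} (B : Bigraph n) (v : Fin n) : ℤ := ∑ u, B.bd v u

namespace BigraphAux

def pairNat (i : ℕ) : ℕ := if i % 2 = 0 then i + 1 else i - 1

lemma pairNat_ne (i : ℕ) : pairNat i ≠ i := by
  unfold pairNat; split_ifs <;> omega

lemma pairNat_invol (i : ℕ) : pairNat (pairNat i) = i := by
  unfold pairNat; split_ifs <;> omega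

lemma pairNat_lt {k i : ℕ} (hk : k % 2 = 0) (hi : i < k) : pairNat i < k := by
  unfold pairNat; split_ifs <;> omega

/-- the fixed-point-free pairing on `Fin k` for even `k` -/
def pairFin {k : ℕ} (hk : k % 2 = 0) (i : Fin k) : Fin k :=
  ⟨pairNat i, pairNat_lt hk i.isLt⟩

lemma pairFin_invol {k : ℕ} (hk : k % 2 = 0) (i : Fin k) : pairFin hk (pairFin hk i) = i :=
  Fin.ext (pairNat_invol i)

lemma pairFin_ne {k : ℕ} (hk : k % 2 = 0) (i : Fin k) : pairFin hk i ≠ i :=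
  fun h => pairNat_ne i (congrArg Fin.val h)

lemma exists_matching {n : ℕ} (S : Finset (Fin n)) (hS : S.card % 2 = 0) :
    ∃ m : Fin n → Fin n, (∀ v, m (m v) = v) ∧
      (∀ v ∈ S, m v ∈ S ∧ m v ≠ v) ∧ (∀ v ∉ S, m v = v) := by
  classical
  set e := S.orderIsoOfFin rfl with he
  refine ⟨fun v => if h : v ∈ S then (e (pairFin hS (e.symm ⟨v, h⟩)) : Fin n) else v,
    ?_, ?_, ?_⟩
  · intro v
    by_cases h : v ∈ S
    · simp only [h, dif_pos]
      set x : S := e (pairFin hS (e.symm ⟨v, h⟩)) with hx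
      have hmem : (x : Fin n) ∈ S := x.2
      rw [dif_pos hmem]
      have h1 : (⟨(x : Fin n), hmem⟩ : S) = x := Subtype.ext rfl
      rw [h1, hx, OrderIso.symm_apply_apply, pairFin_invol, OrderIso.apply_symm_apply]
    · simp [h]
  · intro v h
    simp only [h, dif_pos]
    refine ⟨(e _).2, ?_⟩
    intro hcon
    have h2 : e (pairFin hS (e.symm ⟨v, h⟩)) = ⟨v, h⟩ := Subtype.ext hcon
    have h3 := congrArg e.symm h2
    rw [OrderIso.symm_apply_apply] at h3
    exact pairFin_ne hS _ h3
  · intro v h; simp [h]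

lemma intCast_zmod_two_of_even {x : ℤ} (h : Even x) : (x : ZMod 2) = 0 := by
  rw [ZMod.intCast_zmod_eq_zero_iff_dvd]
  exact_mod_cast h.two_dvd

lemma intCast_zmod_two_of_odd {x : ℤ} (h : ¬ Even x) : (x : ZMod 2) = 1 := by
  rw [Int.not_even_iff_odd] at h
  obtain ⟨k, hk⟩ := h
  subst hk
  push_cast
  have : (2 : ZMod 2) = 0 := by decide
  rw [this]; ring

end BigraphAux

open BigraphAux Finset in
/-- Erdős–Gallai-type theorem for bigraphs: `d ∈ ℤ^n` is the net-degree sequence of a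
bidirected graph iff `d₁ + ⋯ + dₙ` is even and `−(n−1) ≤ dᵢ ≤ n−1` for all `i`. -/
theorem netDegree_sequence_bigraph_iff (n : ℕ) (d : Fin n → ℤ) :
    (∃ B : Bigraph n, B.netDeg = d) ↔
      (Even (∑ i, d i) ∧ ∀ i, -((n : ℤ) - 1) ≤ d i ∧ d i ≤ (n : ℤ) - 1) := by
  classical
  constructor
  · rintro ⟨B, rfl⟩
    constructor
    · -- evenness of the total sum
      have key : ((∑ p : Fin n × Fin n, B.bd p.1 p.2 : ℤ) : ZMod 2) = 0 := by
        push_cast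
        refine Finset.sum_involution (fun p _ => (p.2, p.1)) ?_ ?_
          (fun p _ => Finset.mem_univ _) (fun p _ => rfl)
        · rintro ⟨u, v⟩ -
          show ((B.bd u v : ℤ) : ZMod 2) + ((B.bd v u : ℤ) : ZMod 2) = 0
          rcases B.bd_mem u v with h | h | h
          · have h' : B.bd v u ≠ 0 := fun hc => by
              rw [(B.adj_symm u v).2 hc] at h; norm_num at h
            rcases B.bd_mem v u with h2 | h2 | h2 <;> first
              | (exact absurd h2 h') | (rw [h, h2]; decide)
          · have h' : B.bd v u = 0 := (B.adj_symm u v).1 h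
            rw [h, h']; decide
          · have h' : B.bd v u ≠ 0 := fun hc => by
              rw [(B.adj_symm u v).2 hc] at h; norm_num at h
            rcases B.bd_mem v u with h2 | h2 | h2 <;> first
              | (exact absurd h2 h') | (rw [h, h2]; decide)
        · rintro ⟨u, v⟩ - hne
          intro hc
          have huv : u = v := (Prod.ext_iff.1 hc).2
          apply hne
          show ((B.bd u v : ℤ) : ZMod 2) = 0
          rw [huv, B.loopless]
          simp
      have hsum : ∑ i, B.netDeg i = ∑ p : Fin n × Fin n, B.bd p.1 p.2 := by
        simp only [Bigraph.netDeg]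
        rw [Fintype.sum_prod_type]
      rw [hsum]
      rw [ZMod.intCast_zmod_eq_zero_iff_dvd] at key
      obtain ⟨c, hc⟩ := key
      exact ⟨c, by omega⟩
    · intro i
      have hn : 1 ≤ n := i.pos
      have hsum : B.netDeg i = ∑ u ∈ Finset.univ.erase i, B.bd i u := by
        rw [Bigraph.netDeg]
        exact (Finset.sum_erase _ (B.loopless i)).symm
      have hcard : (Finset.univ.erase i).card = n - 1 := by
        rw [Finset.card_erase_of_mem (Finset.mem_univ i), Finset.card_univ, Fintype.card_fin]
      have hc : ((Finset.univ.erase i).card : ℤ) = (n : ℤ) - 1 := by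
        rw [hcard]; omega
      constructor
      · rw [hsum]
        calc -((n:ℤ) - 1) = ∑ _u ∈ Finset.univ.erase i, (-1 : ℤ) := by
              rw [Finset.sum_const, nsmul_eq_mul, hc]; ring
          _ ≤ _ := Finset.sum_le_sum fun u _ => by
              rcases B.bd_mem i u with h | h | h <;> simp [h]
      · rw [hsum]
        calc ∑ u ∈ Finset.univ.erase i, B.bd i u
            ≤ ∑ _u ∈ Finset.univ.erase i, (1 : ℤ) := Finset.sum_le_sum fun u _ => by
              rcases B.bd_mem i u with h | h | h <;> simp [h]
          _ = (n:ℤ) - 1 := by rw [Finset.sum_const, nsmul_eq_mul, hc]; ring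
  · rintro ⟨heven, hb⟩
    -- set of vertices with "bad parity"
    set S : Finset (Fin n) := Finset.univ.filter (fun v => ¬ Even (d v + (n:ℤ) - 1)) with hSdef
    have hS_mem : ∀ v, v ∈ S ↔ ¬ Even (d v + (n:ℤ) - 1) := by
      intro v
      constructor
      · intro hv; exact (Finset.mem_filter.1 hv).2
      · intro hv; exact Finset.mem_filter.2 ⟨Finset.mem_univ v, hv⟩
    have hScard : S.card % 2 = 0 := by
      have hcast : ((S.card : ℕ) : ZMod 2) = 0 := by
        have h1 : ∑ v, (if v ∈ S then (1 : ZMod 2) else 0) = ((S.card : ℕ) : ZMod 2) := by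
          rw [Finset.sum_ite_mem, Finset.univ_inter, Finset.sum_const, nsmul_eq_mul, mul_one]
        rw [← h1]
        have h2 : ∀ v : Fin n, (if v ∈ S then (1 : ZMod 2) else 0)
            = ((d v + (n:ℤ) - 1 : ℤ) : ZMod 2) := by
          intro v
          by_cases h : Even (d v + (n:ℤ) - 1)
          · have hv : v ∉ S := fun hc => (hS_mem v).1 hc h
            rw [if_neg hv, intCast_zmod_two_of_even h]
          · have hv : v ∈ S := (hS_mem v).2 h
            rw [if_pos hv, intCast_zmod_two_of_odd h]
        rw [Finset.sum_congr rfl fun v _ => h2 v]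
        have h3 : ∑ v : Fin n, ((d v + (n:ℤ) - 1 : ℤ) : ZMod 2)
            = ((∑ v : Fin n, (d v + (n:ℤ) - 1) : ℤ) : ZMod 2) := by push_cast; ring
        rw [h3]
        apply intCast_zmod_two_of_even
        have h4 : ∑ v : Fin n, (d v + (n:ℤ) - 1) = (∑ v, d v) + n * ((n:ℤ) - 1) := by
          have h5 : ∀ v : Fin n, d v + (n:ℤ) - 1 = d v + ((n:ℤ) - 1) := fun v => by ring
          rw [Finset.sum_congr rfl fun v _ => h5 v, Finset.sum_add_distrib,
            Finset.sum_const, Finset.card_univ, Fintype.card_fin, nsmul_eq_mul]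
        rw [h4]
        refine heven.add ?_
        have h6 : Even (((n:ℤ) - 1) * ((n:ℤ) - 1 + 1)) := Int.even_mul_succ_self _
        have h7 : ((n:ℤ) - 1) * ((n:ℤ) - 1 + 1) = n * ((n:ℤ) - 1) := by ring
        rwa [h7] at h6
      rwa [ZMod.natCast_eq_zero_iff, Nat.dvd_iff_mod_eq_zero] at hcast
    obtain ⟨m, hm_invol, hm_mem, hm_fix⟩ := exists_matching S hScard
    -- neighborhoods
    set N : Fin n → Finset (Fin n) := fun v => (Finset.univ.erase v).erase (m v) with hNdef
    have hN_mem : ∀ u v : Fin n, u ∈ N v ↔ u ≠ m v ∧ u ≠ v := by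
      intro u v; simp [hNdef]
    have hN_symm : ∀ u v : Fin n, u ∈ N v ↔ v ∈ N u := by
      intro u v
      rw [hN_mem, hN_mem]
      constructor
      · rintro ⟨h1, h2⟩
        refine ⟨fun hc => h1 ?_, fun hc => h2 hc.symm⟩
        have := congrArg m hc
        rw [hm_invol] at this
        exact this.symm
      · rintro ⟨h1, h2⟩
        refine ⟨fun hc => h1 ?_, fun hc => h2 hc.symm⟩
        have := congrArg m hc
        rw [hm_invol] at this
        exact this.symm
    -- degree facts
    have hdeg : ∀ v : Fin n, ((N v).card : ℤ) + d v = 2 * ((((N v).card : ℤ) + d v)/2) ∧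
        0 ≤ ((N v).card : ℤ) + d v ∧ d v ≤ ((N v).card : ℤ) := by
      intro v
      have hn : 1 ≤ n := v.pos
      by_cases h : v ∈ S
      · have hmv := hm_mem v h
        have hcard : (N v).card = n - 2 := by
          show (((Finset.univ.erase v)).erase (m v)).card = n - 2
          have h1 : m v ∈ Finset.univ.erase v := Finset.mem_erase.2 ⟨hmv.2, Finset.mem_univ _⟩
          rw [Finset.card_erase_of_mem h1, Finset.card_erase_of_mem (Finset.mem_univ v),
            Finset.card_univ, Fintype.card_fin]
          omega
        have hodd : ¬ Even (d v + (n:ℤ) - 1) := (hS_mem v).1 h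
        rw [Int.not_even_iff] at hodd
        have hbv := hb v
        have hn2 : 2 ≤ n := by
          by_contra hc
          interval_cases n <;> omega
        rw [hcard]
        have hcc : ((n - 2 : ℕ) : ℤ) = (n : ℤ) - 2 := by omega
        rw [hcc]
        omega
      · have hmv := hm_fix v h
        have hcard : (N v).card = n - 1 := by
          show (((Finset.univ.erase v)).erase (m v)).card = n - 1
          rw [hmv, Finset.erase_idem, Finset.card_erase_of_mem (Finset.mem_univ v),
            Finset.card_univ, Fintype.card_fin]
        have heva : Even (d v + (n:ℤ) - 1) := by
          by_contra hc
          exact h ((hS_mem v).2 hc)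
        rw [Int.even_iff] at heva
        have hbv := hb v
        rw [hcard]
        have hcc : ((n - 1 : ℕ) : ℤ) = (n : ℤ) - 1 := by omega
        rw [hcc]
        omega
    -- choose the positive part of each row
    have hex : ∀ v : Fin n, ∃ P : Finset (Fin n), P ⊆ N v ∧
        2 * ((P.card : ℤ)) = ((N v).card : ℤ) + d v := by
      intro v
      obtain ⟨h1, h2, h3⟩ := hdeg v
      have hple : ((((N v).card : ℤ) + d v)/2).toNat ≤ (N v).card := by omega
      obtain ⟨Q, hQsub, hQcard⟩ := Finset.exists_subset_card_eq hple
      exact ⟨Q, hQsub, by rw [hQcard]; omega⟩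
    choose P hPsub hPcard using hex
    refine ⟨⟨fun v u => if u ∈ N v then (if u ∈ P v then 1 else -1) else 0, ?_, ?_, ?_⟩, ?_⟩
    · intro u v; split_ifs <;> simp
    · intro v
      have hv : v ∉ N v := by rw [hN_mem]; tauto
      simp [hv]
    · intro u v
      have key : ∀ a b : Fin n, (if b ∈ N a then (if b ∈ P a then (1:ℤ) else -1) else 0) = 0
          ↔ b ∉ N a := by
        intro a b; split_ifs with h1 h2 <;> simp [h1] <;> norm_num
      rw [key, key, hN_symm]
    · funext v
      show ∑ u, (if u ∈ N v then (if u ∈ P v then (1:ℤ) else -1) else 0) = d v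
      rw [Finset.sum_ite_mem, Finset.univ_inter, Finset.sum_ite _ _]
      have hfilter1 : Finset.filter (fun u => u ∈ P v) (N v) = P v :=
        Finset.filter_mem_eq_inter.trans (Finset.inter_eq_right.2 (hPsub v))
      have hfilter2 : Finset.filter (fun u => ¬ u ∈ P v) (N v) = N v \ P v := by
        ext u; simp [Finset.mem_sdiff]
      rw [hfilter1, hfilter2, Finset.sum_const, Finset.sum_const,
        Finset.card_sdiff_of_subset (hPsub v)]
      have hle : (P v).card ≤ (N v).card := Finset.card_le_card (hPsub v)
      have hpc := hPcard v
      have hcast : (((N v).card - (P v).card : ℕ) : ℤ) = ((N v).card : ℤ) - (P v).card := by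
        omega
      simp only [nsmul_eq_mul, mul_one, mul_neg_one, hcast]
      omega
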